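/- Let P_γ be a Markov kernel on ℝ^d, and suppose there exist measurable V : ℝ^d → [0,∞), p : ℝ^d → [0,∞) with p(x) → ∞ as ‖x‖ → ∞, constants α(γ) > 0, C ≥ 0, R > 0, such that for all γ ∈ (0,γ₀]: P_γ V ≤ V − α(γ)p + Cα(γ)·1_{‖x‖ ≤ R}, and each P_γ has an invariant probability measure π_γ. Then π_γ(p) ≤ C for every γ ∈ (0,γ₀], and consequently the family {π_γ : γ ∈ (0,γ₀]} is tight. -/

import Mathlib

open MeasureTheory Filter Set Metric ProbabilityTheory Topology

section aux

variable {E : Type*} [MeasurableSpace E]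

private lemma int_kernel_meas (κ : Kernel E E) [IsSFiniteKernel κ] {f : E → ℝ}
    (hf : Measurable f) : Measurable fun x => ∫ y, f y ∂κ x := by
  have h : StronglyMeasurable (Function.uncurry fun (_ : E) (y : E) => f y) :=
    (hf.comp measurable_snd).stronglyMeasurable
  exact h.integral_kernel_prod_right.measurable

private lemma integ_of_bdd {h : E → ℝ} (hm : Measurable h) (B : ℝ) (hB : ∀ x, |h x| ≤ B)
    (ν : Measure E) [IsFiniteMeasure ν] : Integrable h ν :=
  (integrable_const B).mono' hm.aestronglyMeasurable
    (Eventually.of_forall fun x => by simpa using hB x)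

private lemma aux_key (κ : Kernel E E) [IsMarkovKernel κ]
    (V p : E → ℝ) (hVm : Measurable V) (hpm : Measurable p)
    (hV0 : ∀ x, 0 ≤ V x) (hp0 : ∀ x, 0 ≤ p x)
    (a C : ℝ) (ha : 0 < a) (hC : 0 ≤ C)
    (hVint : ∀ x, Integrable V (κ x))
    (hdrift : ∀ x, ∫ y, V y ∂(κ x) ≤ V x - a * p x + C * a)
    (μ : Measure E) [IsProbabilityMeasure μ] (hinv : μ.bind (fun x => κ x) = μ) :
    ∫⁻ x, ENNReal.ofReal (p x) ∂μ ≤ ENNReal.ofReal C := by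
  -- Step 1: for each truncation level M, ∫ min(p, M) dμ ≤ C
  have main : ∀ M : ℕ, ∫ x, min (p x) (M : ℝ) ∂μ ≤ C := by
    intro M
    set f : E → ℝ := fun x => min (p x) (M : ℝ) with hf
    have hfm : Measurable f := hpm.min measurable_const
    have hf0 : ∀ x, 0 ≤ f x := fun x => le_min (hp0 x) (Nat.cast_nonneg M)
    have hfM : ∀ x, f x ≤ (M : ℝ) := fun x => min_le_right _ _
    have hfp : ∀ x, f x ≤ p x := fun x => min_le_left _ _
    -- iterates of f under the kernel
    set g : ℕ → E → ℝ := fun k => Nat.rec f (fun _ gk x => ∫ y, gk y ∂κ x) k with hg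
    have hgsucc : ∀ k x, g (k + 1) x = ∫ y, g k y ∂κ x := fun _ _ => rfl
    have gprops : ∀ k, Measurable (g k) ∧ (∀ x, 0 ≤ g k x) ∧ (∀ x, g k x ≤ (M : ℝ)) := by
      intro k
      induction k with
      | zero => exact ⟨hfm, hf0, hfM⟩
      | succ k ih =>
        obtain ⟨hm, h0, hMk⟩ := ih
        have hint : ∀ x, Integrable (g k) (κ x) := fun x =>
          integ_of_bdd hm M (fun y => abs_le.2 ⟨by linarith [h0 y], hMk y⟩) _
        refine ⟨int_kernel_meas κ hm, fun x => integral_nonneg h0, fun x => ?_⟩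
        calc ∫ y, g k y ∂κ x ≤ ∫ _, (M : ℝ) ∂κ x :=
              integral_mono (hint x) (integrable_const _) hMk
          _ = (M : ℝ) := by simp
    have gint : ∀ k (ν : Measure E) [IsFiniteMeasure ν], Integrable (g k) ν := by
      intro k ν _
      exact integ_of_bdd (gprops k).1 M
        (fun y => abs_le.2 ⟨by linarith [(gprops k).2.1 y], (gprops k).2.2 y⟩) _
    -- iterates of V under the kernel
    set W : ℕ → E → ℝ := fun k => Nat.rec V (fun _ Wk x => ∫ y, Wk y ∂κ x) k with hW
    have hWsucc : ∀ k x, W (k + 1) x = ∫ y, W k y ∂κ x := fun _ _ => rfl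
    have Wprops : ∀ k, Measurable (W k) ∧ (∀ x, 0 ≤ W k x) ∧
        (∀ x, W k x ≤ V x + k * (C * a)) ∧ (∀ x, Integrable (W k) (κ x)) := by
      intro k
      induction k with
      | zero =>
        refine ⟨hVm, hV0, fun x => ?_, hVint⟩
        show V x ≤ V x + (0 : ℕ) * (C * a)
        simp
      | succ k ih =>
        obtain ⟨hm, h0, hb, hint⟩ := ih
        have hdom : ∀ x : E, Integrable (fun y => V y + k * (C * a)) (κ x) := fun x =>
          (hVint x).add (integrable_const _)
        have hm' : Measurable (W (k + 1)) := int_kernel_meas κ hm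
        have hb' : ∀ x, W (k + 1) x ≤ V x + (k + 1 : ℕ) * (C * a) := by
          intro x
          have h1 : ∫ y, W k y ∂κ x ≤ ∫ y, (V y + k * (C * a)) ∂κ x :=
            integral_mono (hint x) (hdom x) hb
          have h2 : ∫ y, (V y + k * (C * a)) ∂κ x = (∫ y, V y ∂κ x) + k * (C * a) := by
            rw [integral_add (hVint x) (integrable_const _)]; simp
          have h3 := hdrift x
          have h4 : 0 ≤ a * p x := mul_nonneg ha.le (hp0 x)
          have := hgsucc k x
          rw [hWsucc k x]
          push_cast
          nlinarith [h1, h2, h3, h4]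
        refine ⟨hm', fun x => integral_nonneg h0, hb', fun x => ?_⟩
        have hdom' : Integrable (fun y => V y + (k + 1 : ℕ) * (C * a)) (κ x) :=
          (hVint x).add (integrable_const _)
        refine hdom'.mono' hm'.aestronglyMeasurable (Eventually.of_forall fun y => ?_)
        have h0' : 0 ≤ W (k + 1) y := integral_nonneg h0
        rw [Real.norm_eq_abs, abs_of_nonneg h0']
        exact hb' y
    -- Main drift iteration
    have H : ∀ n, ∀ x : E, a * (∑ k ∈ Finset.range n, g k x) + W n x ≤ V x + n * (C * a) := by
      intro n
      induction n with
      | zero => intro x; show a * 0 + V x ≤ V x + (0 : ℕ) * (C * a); simp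
      | succ n ih =>
        intro x
        have hsum : ∑ k ∈ Finset.range (n + 1), g k x
            = (∑ k ∈ Finset.range n, g (k + 1) x) + g 0 x := Finset.sum_range_succ' _ n
        have hintsum : Integrable (fun y => a * ∑ k ∈ Finset.range n, g k y + W n y) (κ x) :=
          ((integrable_finset_sum _ (fun k _ => gint k (κ x))).const_mul a).add
            ((Wprops n).2.2.2 x)
        have key : a * (∑ k ∈ Finset.range n, g (k + 1) x) + W (n + 1) x
            = ∫ y, (a * ∑ k ∈ Finset.range n, g k y + W n y) ∂κ x := by
          rw [integral_add ((integrable_finset_sum _ (fun k _ => gint k (κ x))).const_mul a)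
              ((Wprops n).2.2.2 x), integral_const_mul,
            integral_finset_sum _ (fun k _ => gint k (κ x)), hWsucc]
        have mono : ∫ y, (a * ∑ k ∈ Finset.range n, g k y + W n y) ∂κ x
            ≤ ∫ y, (V y + n * (C * a)) ∂κ x :=
          integral_mono hintsum ((hVint x).add (integrable_const _)) (fun y => ih y)
        have h2 : ∫ y, (V y + n * (C * a)) ∂κ x = (∫ y, V y ∂κ x) + n * (C * a) := by
          rw [integral_add (hVint x) (integrable_const _)]; simp
        have h3 := hdrift x
        have h4 : a * g 0 x ≤ a * p x := mul_le_mul_of_nonneg_left (hfp x) ha.le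
        rw [hsum]
        push_cast
        nlinarith [key, mono, h2, h3, h4]
    -- Invariance: ∫ g k dμ = ∫ f dμ
    have Leq : ∀ k, ∫ x, g k x ∂μ = ∫ x, f x ∂μ := by
      intro k
      induction k with
      | zero => rfl
      | succ k ih =>
        have e1 : ∫ x, g (k + 1) x ∂μ = (∫⁻ x, ENNReal.ofReal (g (k + 1) x) ∂μ).toReal :=
          integral_eq_lintegral_of_nonneg_ae (Eventually.of_forall ((gprops (k + 1)).2.1))
            ((gprops (k + 1)).1.aestronglyMeasurable)
        have e2 : ∀ x, ENNReal.ofReal (g (k + 1) x) = ∫⁻ y, ENNReal.ofReal (g k y) ∂κ x := by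
          intro x
          rw [hgsucc]
          exact ofReal_integral_eq_lintegral_ofReal (gint k (κ x))
            (Eventually.of_forall ((gprops k).2.1))
        have e3 : ∫⁻ x, ∫⁻ y, ENNReal.ofReal (g k y) ∂κ x ∂μ
            = ∫⁻ y, ENNReal.ofReal (g k y) ∂(μ.bind (fun x => κ x)) :=
          (MeasureTheory.Measure.lintegral_bind κ.measurable.aemeasurable
            (ENNReal.measurable_ofReal.comp (gprops k).1).aemeasurable).symm
        have e4 : ∫ x, g k x ∂μ = (∫⁻ x, ENNReal.ofReal (g k x) ∂μ).toReal :=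
          integral_eq_lintegral_of_nonneg_ae (Eventually.of_forall ((gprops k).2.1))
            ((gprops k).1.aestronglyMeasurable)
        rw [e1]
        simp_rw [e2]
        rw [e3, hinv, ← e4, ih]
    -- Average bound for n ≥ 1
    have havg : ∀ n : ℕ, 1 ≤ n → ∫ x, f x ∂μ ≤ ∫ x, min (V x / (a * n) + C) (M : ℝ) ∂μ := by
      intro n hn
      have hn' : (0 : ℝ) < (n : ℝ) := by exact_mod_cast hn
      have e1 : ∫ x, (∑ k ∈ Finset.range n, g k x) / n ∂μ = ∫ x, f x ∂μ := by
        rw [integral_div, integral_finset_sum _ (fun k _ => gint k μ),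
          Finset.sum_congr rfl fun k _ => Leq k]
        simp only [Finset.sum_const, Finset.card_range, nsmul_eq_mul]
        field_simp
      rw [← e1]
      refine integral_mono ((integrable_finset_sum _ (fun k _ => gint k μ)).div_const _)
        (integ_of_bdd (((hVm.div_const _).add_const C).min measurable_const) M
          (fun x => ?_) μ) (fun x => ?_)
      · have h0 : 0 ≤ min (V x / (a * n) + C) (M : ℝ) := by
          refine le_min ?_ (Nat.cast_nonneg M)
          have hd : 0 ≤ V x / (a * n) := div_nonneg (hV0 x) (by positivity)
          linarith
        rw [abs_of_nonneg h0]
        exact min_le_right _ _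
      · have h5 : a * (∑ k ∈ Finset.range n, g k x) ≤ V x + n * (C * a) := by
          have := H n x
          have := (Wprops n).2.1 x
          linarith
        refine le_min ?_ ?_
        · have ha' : (0 : ℝ) < a * n := by positivity
          calc (∑ k ∈ Finset.range n, g k x) / n
              = (a * ∑ k ∈ Finset.range n, g k x) / (a * n) := by
                rw [mul_div_mul_left _ _ ha.ne']
            _ ≤ (V x + n * (C * a)) / (a * n) := by gcongr
            _ = V x / (a * n) + C := by field_simp
        · have h6 : (∑ k ∈ Finset.range n, g k x) ≤ n * M := by
            calc ∑ k ∈ Finset.range n, g k x ≤ ∑ _k ∈ Finset.range n, (M : ℝ) :=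
                Finset.sum_le_sum (fun k _ => (gprops k).2.2 x)
              _ = n * M := by simp [mul_comm]
          rw [div_le_iff₀ hn']
          linarith
    -- Dominated convergence as n → ∞
    have hlim : Tendsto (fun n : ℕ => ∫ x, min (V x / (a * n) + C) (M : ℝ) ∂μ) atTop
        (𝓝 (∫ _x, min C (M : ℝ) ∂μ)) := by
      refine tendsto_integral_of_dominated_convergence (fun _ => (M : ℝ)) ?_ ?_ ?_ ?_
      · intro n
        exact (((hVm.div_const _).add_const C).min measurable_const).aestronglyMeasurable
      · exact integrable_const _
      · intro n
        refine Eventually.of_forall fun x => ?_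
        have h0 : 0 ≤ min (V x / (a * n) + C) (M : ℝ) := by
          refine le_min ?_ (Nat.cast_nonneg M)
          have hd : 0 ≤ V x / (a * n) := div_nonneg (hV0 x) (by positivity)
          linarith
        rw [Real.norm_eq_abs, abs_of_nonneg h0]
        exact min_le_right _ _
      · refine Eventually.of_forall fun x => ?_
        refine Tendsto.min ?_ tendsto_const_nhds
        have h1 : Tendsto (fun n : ℕ => V x / (a * n)) atTop (𝓝 0) :=
          Tendsto.div_atTop tendsto_const_nhds
            (Tendsto.const_mul_atTop ha tendsto_natCast_atTop_atTop)
        simpa using h1.add tendsto_const_nhds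
    have hlim' : Tendsto (fun n : ℕ => ∫ x, min (V x / (a * n) + C) (M : ℝ) ∂μ) atTop
        (𝓝 (min C (M : ℝ))) := by
      simpa [measure_univ] using hlim
    have hfC : ∫ x, f x ∂μ ≤ min C (M : ℝ) :=
      ge_of_tendsto hlim' (eventually_atTop.2 ⟨1, fun n hn => havg n hn⟩)
    exact hfC.trans (min_le_left _ _)
  -- Step 2: monotone convergence in M
  have hsup : ∀ x, ENNReal.ofReal (p x) = ⨆ M : ℕ, ENNReal.ofReal (min (p x) (M : ℝ)) := by
    intro x
    apply le_antisymm
    · refine le_iSup_of_le ⌈p x⌉₊ ?_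
      rw [min_eq_left (Nat.le_ceil _)]
    · exact iSup_le fun M => ENNReal.ofReal_le_ofReal (min_le_left _ _)
  calc ∫⁻ x, ENNReal.ofReal (p x) ∂μ
      = ∫⁻ x, ⨆ M : ℕ, ENNReal.ofReal (min (p x) (M : ℝ)) ∂μ := by simp_rw [hsup]
    _ = ⨆ M : ℕ, ∫⁻ x, ENNReal.ofReal (min (p x) (M : ℝ)) ∂μ := by
        refine lintegral_iSup
          (fun M => ENNReal.measurable_ofReal.comp (hpm.min measurable_const)) ?_
        intro i j hij x
        exact ENNReal.ofReal_le_ofReal (min_le_min le_rfl (by exact_mod_cast hij))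
    _ ≤ ENNReal.ofReal C := by
        refine iSup_le fun M => ?_
        rw [← ofReal_integral_eq_lintegral_ofReal
          (integ_of_bdd (hpm.min measurable_const) M (fun x => by
            rw [abs_of_nonneg (le_min (hp0 x) (Nat.cast_nonneg M))]
            exact min_le_right _ _) μ)
          (Eventually.of_forall fun x => le_min (hp0 x) (Nat.cast_nonneg M))]
        exact ENNReal.ofReal_le_ofReal (main M)

end aux

/-- drift condition `P_γ V ≤ V − α(γ)p + Cα(γ)1_{‖x‖≤R}` with coercive
`p` implies `π_γ(p) ≤ C` for each invariant probability measure `π_γ`, and tightness of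
the family `{π_γ : γ ∈ (0,γ₀]}`. -/
theorem stmt12 {d : ℕ} (γ₀ : ℝ) (hγ₀ : 0 < γ₀)
    (P : ℝ → Kernel (EuclideanSpace ℝ (Fin d)) (EuclideanSpace ℝ (Fin d)))
    (hMarkov : ∀ γ ∈ Ioc 0 γ₀, IsMarkovKernel (P γ))
    (V p : EuclideanSpace ℝ (Fin d) → ℝ)
    (hVm : Measurable V) (hpm : Measurable p)
    (hV0 : ∀ x, 0 ≤ V x) (hp0 : ∀ x, 0 ≤ p x)
    (hcoerc : Tendsto p (cocompact (EuclideanSpace ℝ (Fin d))) atTop)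
    (α : ℝ → ℝ) (hα : ∀ γ ∈ Ioc 0 γ₀, 0 < α γ)
    (C R : ℝ) (hC : 0 ≤ C) (hR : 0 < R)
    (hVint : ∀ γ ∈ Ioc 0 γ₀, ∀ x, Integrable V (P γ x))
    (hdrift : ∀ γ ∈ Ioc 0 γ₀, ∀ x,
      ∫ y, V y ∂(P γ x) ≤ V x - α γ * p x + C * α γ * (closedBall 0 R).indicator 1 x)
    (π : ℝ → Measure (EuclideanSpace ℝ (Fin d)))
    (hπ : ∀ γ ∈ Ioc 0 γ₀, IsProbabilityMeasure (π γ) ∧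
      (π γ).bind (fun x => (P γ) x) = π γ) :
    (∀ γ ∈ Ioc 0 γ₀, ∫ x, p x ∂(π γ) ≤ C) ∧
    ∀ ε > (0 : ℝ), ∃ K : Set (EuclideanSpace ℝ (Fin d)), IsCompact K ∧
      ∀ γ ∈ Ioc 0 γ₀, 1 - ε ≤ ((π γ) K).toReal := by
  have key : ∀ γ ∈ Ioc 0 γ₀, ∫⁻ x, ENNReal.ofReal (p x) ∂(π γ) ≤ ENNReal.ofReal C := by
    intro γ hγ
    haveI := hMarkov γ hγ
    haveI := (hπ γ hγ).1
    refine aux_key (P γ) V p hVm hpm hV0 hp0 (α γ) C (hα γ hγ) hC (hVint γ hγ) ?_ (π γ)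
      (hπ γ hγ).2
    intro x
    refine (hdrift γ hγ x).trans ?_
    have hind : (closedBall (0 : EuclideanSpace ℝ (Fin d)) R).indicator
        (1 : EuclideanSpace ℝ (Fin d) → ℝ) x ≤ 1 := by
      classical
      by_cases h : x ∈ closedBall (0 : EuclideanSpace ℝ (Fin d)) R <;>
        simp [Set.indicator, h]
    have hCa : 0 ≤ C * α γ := mul_nonneg hC (hα γ hγ).le
    nlinarith [mul_le_mul_of_nonneg_left hind hCa]
  constructor
  · intro γ hγ
    haveI := (hπ γ hγ).1
    rw [integral_eq_lintegral_of_nonneg_ae (Eventually.of_forall hp0)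
      hpm.aestronglyMeasurable]
    calc (∫⁻ x, ENNReal.ofReal (p x) ∂(π γ)).toReal
        ≤ (ENNReal.ofReal C).toReal :=
          ENNReal.toReal_mono ENNReal.ofReal_ne_top (key γ hγ)
      _ = C := ENNReal.toReal_ofReal hC
  · intro ε hε
    set M₀ : ℝ := C / ε + 1 with hM₀
    have hM₀pos : 0 < M₀ := by positivity
    have hev := hcoerc.eventually_ge_atTop M₀
    rw [hasBasis_cocompact.eventually_iff] at hev
    obtain ⟨K, hK, hKc⟩ := hev
    refine ⟨K, hK, fun γ hγ => ?_⟩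
    haveI := (hπ γ hγ).1
    have hKm : MeasurableSet K := hK.isClosed.measurableSet
    have h1 : π γ Kᶜ ≤ π γ {x | ENNReal.ofReal M₀ ≤ ENNReal.ofReal (p x)} := by
      apply measure_mono
      intro x hx
      exact ENNReal.ofReal_le_ofReal (hKc hx)
    have h2 := mul_meas_ge_le_lintegral₀
      ((ENNReal.measurable_ofReal.comp hpm).aemeasurable) (ENNReal.ofReal M₀)
      (μ := π γ)
    have hM0ne : ENNReal.ofReal M₀ ≠ 0 := (ENNReal.ofReal_pos.2 hM₀pos).ne'
    have h3 : π γ Kᶜ ≤ ENNReal.ofReal C / ENNReal.ofReal M₀ := by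
      rw [ENNReal.le_div_iff_mul_le (Or.inl hM0ne) (Or.inl ENNReal.ofReal_ne_top)]
      calc π γ Kᶜ * ENNReal.ofReal M₀ = ENNReal.ofReal M₀ * π γ Kᶜ := mul_comm _ _
        _ ≤ ENNReal.ofReal M₀ * π γ {x | ENNReal.ofReal M₀ ≤ ENNReal.ofReal (p x)} := by
            gcongr
        _ ≤ ∫⁻ x, ENNReal.ofReal (p x) ∂(π γ) := h2
        _ ≤ ENNReal.ofReal C := key γ hγ
    have h4 : (π γ Kᶜ).toReal ≤ C / M₀ := by
      have hfin : ENNReal.ofReal C / ENNReal.ofReal M₀ ≠ ⊤ :=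
        (ENNReal.div_lt_top ENNReal.ofReal_ne_top hM0ne).ne
      have := ENNReal.toReal_mono hfin h3
      rwa [ENNReal.toReal_div, ENNReal.toReal_ofReal hC,
        ENNReal.toReal_ofReal hM₀pos.le] at this
    have h5 : C / M₀ < ε := by
      rw [div_lt_iff₀ hM₀pos, hM₀]
      have hCe : C / ε * ε = C := div_mul_cancel₀ C hε.ne'
      nlinarith
    have h6 : (π γ K).toReal + (π γ Kᶜ).toReal = 1 := by
      rw [← ENNReal.toReal_add (measure_ne_top _ _) (measure_ne_top _ _),
        measure_add_measure_compl hKm]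
      simp
    linarith
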